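/- For every integer d ≥ 2 and every M > 0, there exists a finite-index subgroup Λ of ℤ^d whose index N = [ℤ^d : Λ] satisfies N > M, together with a subset P of the discrete torus ℤ^d/Λ such that: P is connected under the rook adjacency induced on ℤ^d/Λ, |P| = (d/(2d−1))·N, and every element of the complement (ℤ^d/Λ) ∖ P has all of its 2d rook-neighbors in P. In particular |complement| = ((d−1)/(2d−1))·N and the complement consists of ((d−1)/(2d−1))·N singleton connected components (holes). -/

import Mathlib

/-- A set `S` is connected under an adjacency relation: it is nonempty and any two
of its elements are joined by a path staying inside `S`. -/
def ConnectedIn {α : Type*} (adj : α → α → Prop) (S : Set α) : Prop :=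
  S.Nonempty ∧ ∀ x ∈ S, ∀ y ∈ S,
    Relation.ReflTransGen (fun a b => adj a b ∧ a ∈ S ∧ b ∈ S) x y

/-- Rook adjacency induced on the discrete torus `ℤ^d/Λ`: two classes are adjacent
iff they admit representatives at `ℓ¹`-distance 1. -/
def torusAdj (d : ℕ) (Λ : AddSubgroup (Fin d → ℤ)) (a b : (Fin d → ℤ) ⧸ Λ) : Prop :=
  ∃ x y : Fin d → ℤ, (QuotientAddGroup.mk x : (Fin d → ℤ) ⧸ Λ) = a ∧
    (QuotientAddGroup.mk y : (Fin d → ℤ) ⧸ Λ) = b ∧ (∑ i, |x i - y i|) = 1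

namespace IdealToric

/-- `ℓ¹`-norm-one integer vectors are signed basis vectors. -/
lemma sum_abs_eq_one {d : ℕ} {z : Fin d → ℤ} (h : ∑ i, |z i| = 1) :
    ∃ i, z = Pi.single i 1 ∨ z = Pi.single i (-1) := by
  have hne : ∃ i, z i ≠ 0 := by
    by_contra hc
    push_neg at hc
    simp [hc] at h
  obtain ⟨i, hi⟩ := hne
  have h1 : 1 ≤ |z i| := Int.one_le_abs hi
  have hle : |z i| ≤ ∑ j, |z j| :=
    Finset.single_le_sum (fun j _ => abs_nonneg (z j)) (Finset.mem_univ i)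
  have hzi : |z i| = 1 := le_antisymm (h ▸ hle) h1
  have hrest : ∀ j, j ≠ i → z j = 0 := by
    intro j hj
    have hsplit : |z i| + ∑ k ∈ Finset.univ.erase i, |z k| = ∑ k, |z k| :=
      Finset.add_sum_erase Finset.univ (fun k => |z k|) (Finset.mem_univ i)
    have hz0 : ∑ k ∈ Finset.univ.erase i, |z k| = 0 := by
      rw [h, hzi] at hsplit; linarith
    have := (Finset.sum_eq_zero_iff_of_nonneg (fun k _ => abs_nonneg (z k))).1 hz0 j
      (Finset.mem_erase.2 ⟨hj, Finset.mem_univ j⟩)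
    exact abs_eq_zero.1 this
  rcases (abs_eq (by norm_num : (0:ℤ) ≤ 1)).1 hzi with h' | h'
  · exact ⟨i, Or.inl (funext fun j => by
      rcases eq_or_ne j i with rfl | hne
      · simpa using h'
      · simp [Pi.single_apply, hne, hrest j hne])⟩
  · exact ⟨i, Or.inr (funext fun j => by
      rcases eq_or_ne j i with rfl | hne
      · simpa using h'
      · simp [Pi.single_apply, hne, hrest j hne])⟩

lemma sum_abs_single {d : ℕ} (i : Fin d) (c : ℤ) (hc : |c| = 1) :
    (∑ j, |(Pi.single i c : Fin d → ℤ) j|) = 1 := by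
  have h : ∀ j : Fin d, |(Pi.single i c : Fin d → ℤ) j| = if j = i then 1 else 0 := by
    intro j
    rcases eq_or_ne j i with rfl | hne
    · simp [hc]
    · simp [Pi.single_apply, hne]
  rw [Finset.sum_congr rfl (fun j _ => h j)]
  simp

/-- Cardinality of `Quot` of an empty relation. -/
lemma card_quot_empty {α : Type*} (r : α → α → Prop) (h : ∀ a b, ¬ r a b) :
    Nat.card (Quot r) = Nat.card α :=
  Nat.card_congr
    ⟨Quot.lift id (fun a b hr => absurd hr (h a b)), Quot.mk r,
      fun q => by induction q using Quot.ind; rfl, fun a => rfl⟩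

/-- The homomorphism `ℤ^d → ZMod (2d-1) × ZMod n` defining our lattice. -/
def tmap (d n : ℕ) : (Fin d → ℤ) →+ ZMod (2 * d - 1) × ZMod n where
  toFun x := (∑ i, (x i : ZMod (2 * d - 1)) * (i.val : ZMod (2 * d - 1)),
    ∑ i, (x i : ZMod n))
  map_zero' := by simp
  map_add' x y := by
    refine Prod.ext ?_ ?_ <;>
      simp [Pi.add_apply, add_mul, Finset.sum_add_distrib]

/-- The step vectors: images of the basis vectors. -/
def sstep (d n : ℕ) (i : Fin d) : ZMod (2 * d - 1) × ZMod n :=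
  ((i.val : ZMod (2 * d - 1)), 1)

lemma tmap_single (d n : ℕ) (i : Fin d) (c : ℤ) :
    tmap d n (Pi.single i c) = ((c : ZMod (2 * d - 1)) * (i.val : ZMod (2 * d - 1)),
      (c : ZMod n)) := by
  refine Prod.ext ?_ ?_
  · simp only [tmap, AddMonoidHom.coe_mk, ZeroHom.coe_mk, Pi.single_apply]
    rw [Finset.sum_congr rfl
      (g := fun j => if j = i then ((c : ZMod (2 * d - 1)) * (j.val : ZMod (2 * d - 1))) else 0)
      (fun j _ => by split <;> simp_all)]
    simp
  · simp only [tmap, AddMonoidHom.coe_mk, ZeroHom.coe_mk, Pi.single_apply]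
    rw [Finset.sum_congr rfl
      (g := fun j => if j = i then ((c : ZMod n)) else 0)
      (fun j _ => by split <;> simp_all)]
    simp

lemma tmap_e (d n : ℕ) (i : Fin d) : tmap d n (Pi.single i 1) = sstep d n i := by
  rw [tmap_single]; simp [sstep]

lemma val_parity {n : ℕ} (m : ℕ) (hn : n = 2 * m) (hm : 0 < m) (t : ZMod n) :
    Odd ((t + 1).val) ↔ ¬ Odd t.val := by
  haveI : NeZero n := ⟨by omega⟩
  haveI : Fact (1 < n) := ⟨by omega⟩
  have h1 : (t + 1).val = (t.val + (1 : ZMod n).val) % n := ZMod.val_add t 1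
  rw [ZMod.val_one] at h1
  have h2 : (t.val + 1) % n % 2 = (t.val + 1) % 2 :=
    Nat.mod_mod_of_dvd _ (⟨m, hn⟩)
  rw [Nat.odd_iff, Nat.odd_iff, h1]
  omega

lemma card_odd_filter (m : ℕ) [NeZero (2 * m)] (hm : 0 < m) :
    ((Finset.univ : Finset (ZMod (2 * m))).filter (fun t => Odd t.val)).card = m := by
  classical
  have himg : (Finset.univ : Finset (ZMod (2 * m))).filter (fun t => Odd t.val) =
      (Finset.range m).image (fun k => ((2 * k + 1 : ℕ) : ZMod (2 * m))) := by
    ext t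
    simp only [Finset.mem_filter, Finset.mem_univ, true_and, Finset.mem_image,
      Finset.mem_range]
    constructor
    · intro ho
      obtain ⟨j, hj0⟩ := ho
      have hj : t.val = 2 * j + 1 := by omega
      have hv : t.val < 2 * m := ZMod.val_lt t
      refine ⟨j, by omega, ?_⟩
      have ht : ((t.val : ℕ) : ZMod (2 * m)) = t := ZMod.natCast_rightInverse t
      rw [← ht, hj]
    · rintro ⟨k, hk, rfl⟩
      rw [ZMod.val_cast_of_lt (by omega)]
      exact ⟨k, by ring⟩
  rw [himg, Finset.card_image_of_injOn, Finset.card_range]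
  intro a ha b hb hab
  simp only [Finset.coe_range, Set.mem_Iio] at ha hb
  have := congrArg ZMod.val hab
  rw [ZMod.val_cast_of_lt (by omega), ZMod.val_cast_of_lt (by omega)] at this
  omega

lemma card_even_filter (m : ℕ) [NeZero (2 * m)] (hm : 0 < m) :
    ((Finset.univ : Finset (ZMod (2 * m))).filter (fun t => ¬ Odd t.val)).card = m := by
  classical
  have := Finset.card_filter_add_card_filter_not
    (s := (Finset.univ : Finset (ZMod (2 * m)))) (fun t : ZMod (2 * m) => Odd t.val)
  rw [card_odd_filter m hm, Finset.card_univ, ZMod.card] at this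
  omega

end IdealToric

open IdealToric in
/-- For every `d ≥ 2` and every `M`, there is a finite-index subgroup `Λ ≤ ℤ^d` of index
`N > M` and a toric polyomino `P ⊆ ℤ^d/Λ` with `(d/(2d−1))·N` tiles all of whose
complement consists of `((d−1)/(2d−1))·N` singleton holes: every cell not in `P` has all
its rook-neighbors in `P`, so the complement has `((d−1)/(2d−1))·N` cells and
`((d−1)/(2d−1))·N` connected components. -/
theorem exists_ideal_toric_polyomino (d : ℕ) (hd : 2 ≤ d) (M : ℕ) :
    ∃ (Λ : AddSubgroup (Fin d → ℤ)) (N : ℕ),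
      Λ.index = N ∧ M < N ∧
      ∃ P : Set ((Fin d → ℤ) ⧸ Λ),
        ConnectedIn (torusAdj d Λ) P ∧
        (2 * d - 1) * P.ncard = d * N ∧
        (∀ y, y ∉ P → ∀ z, torusAdj d Λ y z → z ∈ P) ∧
        (2 * d - 1) * Set.ncard Pᶜ = (d - 1) * N ∧
        (2 * d - 1) * Nat.card (Quot fun a b : ↥(Pᶜ) => torusAdj d Λ a.1 b.1) = (d - 1) * N := by
  classical
  set m : ℕ := M + 1 with hm_def
  have hm : 0 < m := Nat.succ_pos M
  set q : ℕ := 2 * d - 1 with hq_def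
  set n : ℕ := 2 * m with hn_def
  haveI : NeZero q := ⟨by omega⟩
  haveI : NeZero n := ⟨by omega⟩
  set φ : (Fin d → ℤ) →+ ZMod q × ZMod n := tmap d n with hφ_def
  -- surjectivity of φ
  have hsurj : Function.Surjective φ := by
    intro g
    obtain ⟨u, t⟩ := g
    set i0 : Fin d := ⟨0, by omega⟩
    set i1 : Fin d := ⟨1, by omega⟩
    refine ⟨(u.val : ℤ) • (Pi.single i1 1 - Pi.single i0 1) + (t.val : ℤ) • Pi.single i0 1, ?_⟩
    have hu : ((u.val : ℕ) : ZMod q) = u := ZMod.natCast_rightInverse u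
    have ht : ((t.val : ℕ) : ZMod n) = t := ZMod.natCast_rightInverse t
    have h10 : φ (Pi.single i1 1) = ((1 : ZMod q), (1 : ZMod n)) := by
      rw [hφ_def, tmap_e]
      have : (i1.val : ℕ) = 1 := rfl
      simp [sstep, this]
    have h00 : φ (Pi.single i0 1) = ((0 : ZMod q), (1 : ZMod n)) := by
      rw [hφ_def, tmap_e]
      have : (i0.val : ℕ) = 0 := rfl
      simp [sstep, this]
    rw [map_add, map_zsmul, map_zsmul, map_sub, h10, h00, Prod.mk_sub_mk, Prod.smul_mk,
      Prod.smul_mk, Prod.mk_add_mk]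
    rw [sub_zero, sub_self, smul_zero, smul_zero, add_zero, zero_add, zsmul_one, zsmul_one]
    rw [Int.cast_natCast, Int.cast_natCast, hu, ht]
  set Λ : AddSubgroup (Fin d → ℤ) := φ.ker with hΛ_def
  set ψ : ((Fin d → ℤ) ⧸ Λ) ≃+ ZMod q × ZMod n :=
    QuotientAddGroup.quotientKerEquivOfSurjective φ hsurj with hψ_def
  have hψmk : ∀ x : Fin d → ℤ, ψ (QuotientAddGroup.mk x) = φ x := fun x => rfl
  set N : ℕ := q * n with hN_def
  -- adjacency characterization
  have adj_iff : ∀ a b, torusAdj d Λ a b ↔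
      ∃ i : Fin d, ψ b = ψ a + sstep d n i ∨ ψ a = ψ b + sstep d n i := by
    intro a b
    constructor
    · rintro ⟨x, y, rfl, rfl, hsum⟩
      have hsum' : ∑ i, |(x - y) i| = 1 := by simpa [Pi.sub_apply] using hsum
      obtain ⟨i, hz | hz⟩ := sum_abs_eq_one hsum'
      · refine ⟨i, Or.inr ?_⟩
        have hx : x = y + Pi.single i 1 := by
          rw [← hz]; abel
        rw [hψmk, hψmk, hx, map_add, tmap_e]
      · refine ⟨i, Or.inl ?_⟩
        have hz' : x - y = -(Pi.single i 1) := by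
          rw [hz]
          ext j
          rcases eq_or_ne j i with rfl | hne
          · simp
          · simp [Pi.single_apply, hne]
        have h2 : y - x = Pi.single i 1 := by
          rw [← neg_sub x y, hz', neg_neg]
        have hy : y = x + Pi.single i 1 := by rw [← h2]; abel
        rw [hψmk, hψmk, hy, map_add, tmap_e]
    · rintro ⟨i, h | h⟩
      · obtain ⟨x, rfl⟩ := QuotientAddGroup.mk_surjective a
        refine ⟨x, x + Pi.single i 1, rfl, ?_, ?_⟩
        · apply ψ.injective
          rw [hψmk, map_add, tmap_e, ← hψmk, h]
        · have hterm : ∀ j, |x j - (x + Pi.single i 1 : Fin d → ℤ) j| =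
              |(Pi.single i (-1 : ℤ) : Fin d → ℤ) j| := by
            intro j
            rcases eq_or_ne j i with hji | hne
            · rw [hji]
              have h3 : x i + (Pi.single i (1:ℤ) : Fin d → ℤ) i = x i + 1 := by simp
              rw [Pi.add_apply, h3]
              simp
            · simp [Pi.single_apply, hne]
          rw [Finset.sum_congr rfl (fun j _ => hterm j)]
          exact sum_abs_single i (-1) (by norm_num)
      · obtain ⟨y, rfl⟩ := QuotientAddGroup.mk_surjective b
        refine ⟨y + Pi.single i 1, y, ?_, rfl, ?_⟩
        · apply ψ.injective
          rw [hψmk, map_add, tmap_e, ← hψmk, h]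
        · have hterm : ∀ j, |(y + Pi.single i 1 : Fin d → ℤ) j - y j| =
              |(Pi.single i (1 : ℤ) : Fin d → ℤ) j| := by
            intro j
            rcases eq_or_ne j i with hji | hne
            · rw [hji]
              have h3 : y i + (Pi.single i (1:ℤ) : Fin d → ℤ) i = y i + 1 := by simp
              rw [Pi.add_apply, h3]
              simp
            · simp [Pi.single_apply, hne]
          rw [Finset.sum_congr rfl (fun j _ => hterm j)]
          exact sum_abs_single i 1 (by norm_num)
  -- the polyomino
  set PF : Finset (ZMod q × ZMod n) :=
    Finset.univ.filter (fun g => Odd g.2.val ∨ (¬ Odd g.2.val ∧ g.1 = 0)) with hPF_def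
  set P : Set ((Fin d → ℤ) ⧸ Λ) := (⇑ψ) ⁻¹' ↑PF with hP_def
  have memP : ∀ a, a ∈ P ↔ (Odd (ψ a).2.val ∨ (¬ Odd (ψ a).2.val ∧ (ψ a).1 = 0)) := by
    intro a
    simp [hP_def, hPF_def]
  -- parity lemma specialized
  have hpar : ∀ t : ZMod n, Odd ((t + 1).val) ↔ ¬ Odd t.val :=
    fun t => val_parity m hn_def hm t
  -- spine membership
  have spinemem : ∀ t : ZMod n, ψ.symm (0, t) ∈ P := by
    intro t
    rw [memP, ψ.apply_symm_apply]
    by_cases h : Odd t.val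
    · exact Or.inl h
    · exact Or.inr ⟨h, rfl⟩
  -- counting preimages
  have hpre : ∀ S : Finset (ZMod q × ZMod n), ((⇑ψ) ⁻¹' ↑S).ncard = S.card := by
    intro S
    rw [← Nat.card_coe_set_eq, ← Set.ncard_coe_finset S, ← Nat.card_coe_set_eq]
    exact Nat.card_congr (ψ.toEquiv.subtypeEquiv fun a => Iff.rfl)
  -- cardinality of PF
  have hPFcard : PF.card = 2 * d * m := by
    have hsplit : PF = (Finset.univ ×ˢ Finset.univ.filter (fun t : ZMod n => Odd t.val)) ∪
        (({(0 : ZMod q)} : Finset (ZMod q)) ×ˢ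
          Finset.univ.filter (fun t : ZMod n => ¬ Odd t.val)) := by
      ext ⟨u, t⟩
      simp only [hPF_def, Finset.mem_filter, Finset.mem_univ, true_and, Finset.mem_union,
        Finset.mem_product, Finset.mem_singleton]
      tauto
    rw [hsplit, Finset.card_union_of_disjoint, Finset.card_product, Finset.card_product]
    · have ho : (Finset.univ.filter (fun t : ZMod n => Odd t.val)).card = m :=
        card_odd_filter m hm
      have he' : (Finset.univ.filter (fun t : ZMod n => ¬ Odd t.val)).card = m :=
        card_even_filter m hm
      rw [Finset.card_univ, ZMod.card, Finset.card_singleton, ho, he']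
      obtain ⟨e, he⟩ : ∃ e, d - 2 = e := ⟨_, rfl⟩
      have hd2 : d = e + 2 := by omega
      have hq3 : q = 2 * e + 3 := by omega
      rw [hq3, hd2]
      ring
    · rw [Finset.disjoint_left]
      rintro ⟨u, t⟩ h1 h2
      simp only [Finset.mem_product, Finset.mem_filter, Finset.mem_univ, true_and,
        Finset.mem_singleton] at h1 h2
      tauto
  -- Nat.card of the quotient
  have hcardQ : Nat.card ((Fin d → ℤ) ⧸ Λ) = N := by
    rw [Nat.card_congr ψ.toEquiv, Nat.card_prod, Nat.card_zmod, Nat.card_zmod]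
  have hNflat : N = q * n := hN_def
  refine ⟨Λ, N, ?_, ?_, P, ?_, ?_, ?_, ?_, ?_⟩
  · rw [AddSubgroup.index_eq_card, hcardQ]
  · have h1 : n ≤ N := by
      rw [hNflat]
      exact Nat.le_mul_of_pos_left n (by omega)
    omega
  · -- connectivity
    set R := fun a b => torusAdj d Λ a b ∧ a ∈ P ∧ b ∈ P with hR_def
    have hRsymm : Symmetric R := by
      rintro a b ⟨⟨x, y, hx, hy, hs⟩, ha, hb⟩
      exact ⟨⟨y, x, hy, hx, by rw [← hs]; exact Finset.sum_congr rfl fun j _ => abs_sub_comm _ _⟩,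
        hb, ha⟩
    set base := ψ.symm (0, (0 : ZMod n)) with hbase_def
    have spine : ∀ k : ℕ, Relation.ReflTransGen R base (ψ.symm (0, (k : ZMod n))) := by
      intro k
      induction k with
      | zero =>
        rw [Nat.cast_zero]
      | succ k ih =>
        refine ih.tail ⟨?_, spinemem _, spinemem _⟩
        rw [adj_iff]
        refine ⟨⟨0, by omega⟩, Or.inl ?_⟩
        rw [ψ.apply_symm_apply, ψ.apply_symm_apply]
        refine Prod.ext ?_ ?_
        · show (0 : ZMod q) = 0 + (((0 : ℕ)) : ZMod q)
          simp
        · show ((k + 1 : ℕ) : ZMod n) = ((k : ℕ) : ZMod n) + 1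
          push_cast
          ring
    have reach : ∀ a ∈ P, Relation.ReflTransGen R base a := by
      intro a ha
      set g := ψ a with hg_def
      have hginv : ψ.symm g = a := ψ.symm_apply_apply a
      by_cases hu : g.1 = 0
      · have : a = ψ.symm (0, ((g.2.val : ℕ) : ZMod n)) := by
          rw [ZMod.natCast_rightInverse g.2, ← hu, ← hginv]
        rw [this]
        exact spine g.2.val
      · have hodd : Odd g.2.val := by
          rcases (memP a).1 ha with h | h
          · exact h
          · exact absurd h.2 hu
        have hval0 : g.1.val ≠ 0 := fun h => hu ((ZMod.val_eq_zero g.1).1 h)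
        have hvalq : g.1.val < q := ZMod.val_lt g.1
        by_cases hc : g.1.val ≤ d - 1
        · -- step from (0, t-1) to a  with i = g.1.val
          set i : Fin d := ⟨g.1.val, by omega⟩ with hi_def
          have hadj : R (ψ.symm (0, g.2 - 1)) a := by
            refine ⟨?_, spinemem _, ha⟩
            rw [adj_iff]
            refine ⟨i, Or.inl ?_⟩
            rw [ψ.apply_symm_apply, ← hg_def]
            refine Prod.ext ?_ ?_
            · show g.1 = 0 + ((i.val : ℕ) : ZMod q)
              rw [hi_def]
              simp [ZMod.natCast_rightInverse g.1]
            · show g.2 = (g.2 - 1) + 1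
              ring
          refine Relation.ReflTransGen.tail ?_ hadj
          have : (0, g.2 - 1) = ((0 : ZMod q), (((g.2 - 1).val : ℕ) : ZMod n)) := by
            rw [ZMod.natCast_rightInverse (g.2 - 1)]
          rw [this]
          exact spine _
        · -- step from (0, t+1) to a with i = q - g.1.val
          set i : Fin d := ⟨q - g.1.val, by omega⟩ with hi_def
          have hadj : R (ψ.symm (0, g.2 + 1)) a := by
            refine ⟨?_, spinemem _, ha⟩
            rw [adj_iff]
            refine ⟨i, Or.inr ?_⟩
            rw [ψ.apply_symm_apply, ← hg_def]
            refine Prod.ext ?_ ?_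
            · show (0 : ZMod q) = g.1 + ((i.val : ℕ) : ZMod q)
              rw [hi_def]
              have h1 : ((q - g.1.val : ℕ) : ZMod q) = (q : ZMod q) - (g.1.val : ZMod q) := by
                push_cast [Nat.cast_sub (le_of_lt hvalq)]
                ring
              rw [h1, ZMod.natCast_self, ZMod.natCast_rightInverse g.1]
              ring
            · rfl
          refine Relation.ReflTransGen.tail ?_ hadj
          have : (0, g.2 + 1) = ((0 : ZMod q), (((g.2 + 1).val : ℕ) : ZMod n)) := by
            rw [ZMod.natCast_rightInverse (g.2 + 1)]
          rw [this]
          exact spine _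
    refine ⟨⟨base, spinemem 0⟩, fun x hx y hy => ?_⟩
    exact Relation.ReflTransGen.trans
      ((@Relation.ReflTransGen.stdSymm _ R ⟨fun _ _ h => hRsymm h⟩).symm _ _ (reach x hx)) (reach y hy)
  · -- |P|
    rw [hP_def, hpre, hPFcard, hN_def, hq_def, hn_def]
    obtain ⟨e, he⟩ : ∃ e, d - 2 = e := ⟨_, rfl⟩
    have hd1 : 2 * d - 1 = 2 * e + 3 := by omega
    have hd2 : d = e + 2 := by omega
    rw [hd1, hd2]
    ring
  · -- holes isolated
    intro y hy z hzadj
    have hy' : ¬ Odd (ψ y).2.val := by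
      intro h
      exact hy ((memP y).2 (Or.inl h))
    rw [adj_iff] at hzadj
    obtain ⟨i, h | h⟩ := hzadj
    · have h2 : (ψ z).2 = (ψ y).2 + 1 := by rw [h]; rfl
      refine (memP z).2 (Or.inl ?_)
      rw [h2]
      exact (hpar _).2 hy'
    · have h2 : (ψ y).2 = (ψ z).2 + 1 := by rw [h]; rfl
      refine (memP z).2 (Or.inl ?_)
      by_contra hne
      exact hy' (h2 ▸ (hpar _).2 hne)
  · -- |holes|
    have hcompl : Pᶜ = (⇑ψ) ⁻¹' ↑(PFᶜ) := by
      rw [hP_def, ← Set.preimage_compl, Finset.coe_compl]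
    rw [hcompl, hpre, Finset.card_compl, hPFcard, Fintype.card_prod, ZMod.card, ZMod.card,
      hN_def]
    obtain ⟨e, he⟩ : ∃ e, d - 2 = e := ⟨_, rfl⟩
    have hd2 : d = e + 2 := by omega
    have hq3 : q = 2 * e + 3 := by omega
    obtain ⟨k, hk⟩ : ∃ k, e * m = k := ⟨_, rfl⟩
    have hk1 : q * n = 4 * k + 6 * m := by rw [hq3, hn_def, ← hk]; ring
    have hk2 : 2 * d * m = 2 * k + 4 * m := by rw [hd2, ← hk]; ring
    rw [hk1, hk2]
    have hs : 4 * k + 6 * m - (2 * k + 4 * m) = 2 * k + 2 * m := by omega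
    rw [hs, hq3, show d - 1 = e + 1 by omega, ← hk]
    ring
  · -- number of holes components
    have hempty : ∀ a b : ↥(Pᶜ), ¬ torusAdj d Λ a.1 b.1 := by
      rintro ⟨a, haC⟩ ⟨b, hbC⟩ hadj
      have ha' : ¬ Odd (ψ a).2.val := fun h => haC ((memP a).2 (Or.inl h))
      have hb' : ¬ Odd (ψ b).2.val := fun h => hbC ((memP b).2 (Or.inl h))
      rw [adj_iff] at hadj
      obtain ⟨i, h | h⟩ := hadj
      · have h2 : (ψ b).2 = (ψ a).2 + 1 := by rw [h]; rfl
        exact hb' (h2 ▸ (hpar _).2 ha')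
      · have h2 : (ψ a).2 = (ψ b).2 + 1 := by rw [h]; rfl
        exact ha' (h2 ▸ (hpar _).2 hb')
    rw [card_quot_empty _ hempty, Nat.card_coe_set_eq]
    have hcompl : Pᶜ = (⇑ψ) ⁻¹' ↑(PFᶜ) := by
      rw [hP_def, ← Set.preimage_compl, Finset.coe_compl]
    rw [hcompl, hpre, Finset.card_compl, hPFcard, Fintype.card_prod, ZMod.card, ZMod.card,
      hN_def]
    obtain ⟨e, he⟩ : ∃ e, d - 2 = e := ⟨_, rfl⟩
    have hd2 : d = e + 2 := by omega
    have hq3 : q = 2 * e + 3 := by omega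
    obtain ⟨k, hk⟩ : ∃ k, e * m = k := ⟨_, rfl⟩
    have hk1 : q * n = 4 * k + 6 * m := by rw [hq3, hn_def, ← hk]; ring
    have hk2 : 2 * d * m = 2 * k + 4 * m := by rw [hd2, ← hk]; ring
    rw [hk1, hk2]
    have hs : 4 * k + 6 * m - (2 * k + 4 * m) = 2 * k + 2 * m := by omega
    rw [hs, hq3, show d - 1 = e + 1 by omega, ← hk]
    ring
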